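/- Let S and P be symmetric involutions of an n-dimensional real inner product space V, let r = dim E₊(S) with orthonormal basis {ξ₁,…,ξ_r}. Then tr(SPSP) = n − 4r + 4·Σ_{i,j=1}^{r} ⟨Pξᵢ, ξⱼ⟩². -/

import Mathlib

open scoped RealInnerProductSpace
open Module

private theorem trace_eq_sum_inner' {V : Type*} [NormedAddCommGroup V] [InnerProductSpace ℝ V]
    [FiniteDimensional ℝ V] {ι : Type*} [Fintype ι] [DecidableEq ι]
    (B : OrthonormalBasis ι ℝ V) (T : V →ₗ[ℝ] V) :
    LinearMap.trace ℝ V T = ∑ k, ⟪B k, T (B k)⟫ := by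
  rw [LinearMap.trace_eq_matrix_trace ℝ B.toBasis, Matrix.trace]
  congr 1; ext k
  rw [Matrix.diag_apply, LinearMap.toMatrix_apply, OrthonormalBasis.coe_toBasis,
    OrthonormalBasis.coe_toBasis_repr_apply, OrthonormalBasis.repr_apply_apply]

/-- Let `S` and `P` be symmetric involutions of an `n`-dimensional real inner product space `V`,
let `r = dim E₊(S)` with orthonormal basis `{ξ₁,…,ξ_r}`. Then
`tr(SPSP) = n − 4r + 4·Σ_{i,j=1}^{r} ⟨Pξᵢ, ξⱼ⟩²`. -/
theorem trace_SPSP {V : Type*} [NormedAddCommGroup V]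
    [InnerProductSpace ℝ V] [FiniteDimensional ℝ V] (n r : ℕ)
    (hn : finrank ℝ V = n) (S P : V →ₗ[ℝ] V)
    (hSsym : ∀ x y : V, ⟪S x, y⟫ = ⟪x, S y⟫) (hSinv : ∀ x : V, S (S x) = x)
    (hPsym : ∀ x y : V, ⟪P x, y⟫ = ⟪x, P y⟫) (hPinv : ∀ x : V, P (P x) = x)
    (hr : finrank ℝ ↥(Module.End.eigenspace S (1 : ℝ)) = r)
    (ξ : Fin r → V) (hortho : Orthonormal ℝ ξ)
    (hmem : ∀ i, ξ i ∈ Module.End.eigenspace S (1 : ℝ))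
    (hspan : Submodule.span ℝ (Set.range ξ) = Module.End.eigenspace S (1 : ℝ)) :
    LinearMap.trace ℝ V (S ∘ₗ P ∘ₗ S ∘ₗ P) =
      (n : ℝ) - 4 * (r : ℝ) + 4 * ∑ i, ∑ j, ⟪P (ξ i), ξ j⟫ ^ 2 := by
  classical
  set W := Module.End.eigenspace S (1 : ℝ) with hW
  -- S acts as identity on W
  have hSpos : ∀ x ∈ W, S x = x := by
    intro x hx
    have := Module.End.mem_eigenspace_iff.mp hx
    simpa using this
  -- S acts as -1 on Wᗮ
  have hSneg : ∀ x ∈ Wᗮ, S x = -x := by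
    intro x hx
    have hmemW : S x + x ∈ W := by
      rw [Module.End.mem_eigenspace_iff, one_smul, map_add, hSinv, add_comm]
    have h0 : ⟪S x + x, x⟫ = 0 := hx _ hmemW
    have hSS : ⟪S x, S x⟫ = ⟪x, x⟫ := by rw [hSsym, hSinv]
    have h1 : ⟪S x + x, S x + x⟫ = 0 := by
      simp only [inner_add_left, inner_add_right] at h0 ⊢
      have hc : ⟪x, S x⟫ = ⟪S x, x⟫ := real_inner_comm _ _
      nlinarith [h0, hSS]
    have h2 : S x + x = 0 := inner_self_eq_zero.mp h1
    exact eq_neg_of_add_eq_zero_left h2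
  -- the orthonormal basis of Wᗮ
  set m := finrank ℝ ↥(Wᗮ) with hm
  let η : OrthonormalBasis (Fin m) ℝ ↥(Wᗮ) := stdOrthonormalBasis ℝ ↥(Wᗮ)
  have hrm : r + m = n := by
    rw [← hr, ← hn, hm]
    exact Submodule.finrank_add_finrank_orthogonal W
  -- the combined family
  set b : Fin r ⊕ Fin m → V := Sum.elim ξ (fun p => (η p : V)) with hb
  have hbmem : ∀ i, b (Sum.inl i) ∈ W := fun i => hmem i
  have hbmem' : ∀ p, b (Sum.inr p) ∈ Wᗮ := fun p => (η p).2
  have hbon : Orthonormal ℝ b := by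
    constructor
    · rintro (i | p)
      · exact hortho.1 i
      · show ‖((η p : V))‖ = 1
        exact η.orthonormal.1 p
    · rintro (i | p) (j | q) hne
      · exact hortho.2 (by simpa using hne)
      · exact Submodule.inner_right_of_mem_orthogonal (hbmem i) (hbmem' q)
      · exact Submodule.inner_left_of_mem_orthogonal (hbmem j) (hbmem' p)
      · have := η.orthonormal.2 (show (p : Fin m) ≠ q by simpa using hne)
        show ⟪(η p : V), (η q : V)⟫ = 0
        simpa [Submodule.coe_inner] using this
  have hbspan : ⊤ ≤ Submodule.span ℝ (Set.range b) := by
    have h1 : Submodule.span ℝ (Set.range b) =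
        Submodule.span ℝ (Set.range ξ) ⊔ Submodule.span ℝ (Set.range fun p => ((η p : V))) := by
      rw [← Submodule.span_union]
      congr 1
      rw [hb]
      ext x
      simp [Set.Sum.elim_range]
    have h2 : Submodule.span ℝ (Set.range fun p => ((η p : V))) = Wᗮ := by
      have h3 : (Set.range fun p => ((η p : V))) = (⇑(Wᗮ).subtype '' Set.range η : Set V) := by
        ext x; simp [Set.range_comp, Submodule.subtype]
      have h4 : Submodule.span ℝ (Set.range ⇑η) = ⊤ := by
        rw [← η.coe_toBasis]; exact η.toBasis.span_eq
      rw [h3, Submodule.span_image, h4, Submodule.map_top, Submodule.range_subtype]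
    rw [h1, hspan, h2, Submodule.sup_orthogonal_of_hasOrthogonalProjection]
  let B : OrthonormalBasis (Fin r ⊕ Fin m) ℝ V := OrthonormalBasis.mk hbon hbspan
  have hBapp : ∀ k, B k = b k := fun k => by simp [B, OrthonormalBasis.coe_mk]
  -- sign
  set ε : Fin r ⊕ Fin m → ℝ := Sum.elim (fun _ => 1) (fun _ => -1) with hε
  have hSB : ∀ k, S (b k) = ε k • b k := by
    rintro (i | p)
    · rw [hSpos _ (hbmem i)]; simp [hε]
    · rw [hSneg _ (hbmem' p)]; simp [hε]
  -- matrix entries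
  set a : (Fin r ⊕ Fin m) → (Fin r ⊕ Fin m) → ℝ := fun k l => ⟪P (b k), b l⟫ with ha
  have hasymm : ∀ k l, a k l = a l k := by
    intro k l
    rw [ha]
    dsimp only
    rw [hPsym, real_inner_comm]
  -- Parseval: each row has sum of squares 1
  have hrow : ∀ k, ∑ l, (a k l) ^ 2 = 1 := by
    intro k
    have := B.sum_inner_mul_inner (P (b k)) (P (b k))
    have hnorm : ⟪P (b k), P (b k)⟫ = 1 := by
      rw [hPsym, hPinv, real_inner_self_eq_norm_sq, hbon.1 k, one_pow]
    rw [hnorm] at this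
    rw [← this]
    apply Finset.sum_congr rfl
    intro l _
    rw [hBapp, ha]
    dsimp only
    rw [sq, real_inner_comm (b l) (P (b k))]
  -- inner products in trace
  have hinner : ∀ k, ⟪B k, (S ∘ₗ P ∘ₗ S ∘ₗ P) (B k)⟫ = ε k * ∑ l, ε l * (a k l) ^ 2 := by
    intro k
    rw [hBapp]
    have h1 : ⟪b k, (S ∘ₗ P ∘ₗ S ∘ₗ P) (b k)⟫ = ε k * ⟪P (b k), S (P (b k))⟫ := by
      simp only [LinearMap.comp_apply]
      rw [← hSsym, hSB k, inner_smul_left, hPsym]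
      norm_num
    rw [h1]
    congr 1
    have h2 := B.sum_inner_mul_inner (P (b k)) (S (P (b k)))
    rw [← h2]
    apply Finset.sum_congr rfl
    intro l _
    rw [hBapp, ← hSsym, hSB l, inner_smul_left]
    rw [ha]
    dsimp only
    rw [sq, real_inner_comm (b l) (P (b k))]
    simp only [conj_trivial]
    ring
  -- compute the trace
  rw [trace_eq_sum_inner' B]
  simp only [hinner]
  -- split the sums over the sum type
  rw [Fintype.sum_sum_type]
  have hsplit : ∀ k, ∑ l, ε l * (a k l) ^ 2 =
      (∑ j : Fin r, (a k (Sum.inl j)) ^ 2) - ∑ q : Fin m, (a k (Sum.inr q)) ^ 2 := by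
    intro k
    rw [Fintype.sum_sum_type]
    simp [hε, sub_eq_add_neg, Finset.sum_neg_distrib]
  -- notation for block sums
  set A := ∑ i : Fin r, ∑ j : Fin r, (a (Sum.inl i) (Sum.inl j)) ^ 2 with hA
  set C := ∑ i : Fin r, ∑ q : Fin m, (a (Sum.inl i) (Sum.inr q)) ^ 2 with hC
  set C' := ∑ p : Fin m, ∑ j : Fin r, (a (Sum.inr p) (Sum.inl j)) ^ 2 with hC'
  set D := ∑ p : Fin m, ∑ q : Fin m, (a (Sum.inr p) (Sum.inr q)) ^ 2 with hD
  have hAC : A + C = r := by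
    rw [hA, hC, ← Finset.sum_add_distrib]
    have : ∀ i : Fin r, (∑ j : Fin r, (a (Sum.inl i) (Sum.inl j)) ^ 2) +
        ∑ q : Fin m, (a (Sum.inl i) (Sum.inr q)) ^ 2 = 1 := by
      intro i
      have := hrow (Sum.inl i)
      rwa [Fintype.sum_sum_type] at this
    simp [this]
  have hCD : C' + D = m := by
    rw [hC', hD, ← Finset.sum_add_distrib]
    have : ∀ p : Fin m, (∑ j : Fin r, (a (Sum.inr p) (Sum.inl j)) ^ 2) +
        ∑ q : Fin m, (a (Sum.inr p) (Sum.inr q)) ^ 2 = 1 := by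
      intro p
      have := hrow (Sum.inr p)
      rwa [Fintype.sum_sum_type] at this
    simp [this]
  have hCC : C = C' := by
    rw [hC, hC', Finset.sum_comm]
    apply Finset.sum_congr rfl; intro p _
    apply Finset.sum_congr rfl; intro i _
    rw [hasymm]
  have hgoalA : ∑ i, ∑ j, ⟪P (ξ i), ξ j⟫ ^ 2 = A := by
    rw [hA]; rfl
  have hLHS : (∑ i : Fin r, ε (Sum.inl i) * ∑ l, ε l * (a (Sum.inl i) l) ^ 2) +
      ∑ p : Fin m, ε (Sum.inr p) * ∑ l, ε l * (a (Sum.inr p) l) ^ 2 = (A - C) - (C' - D) := by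
    have e1 : ∀ i : Fin r, ε (Sum.inl i) * ∑ l, ε l * (a (Sum.inl i) l) ^ 2 =
        (∑ j : Fin r, (a (Sum.inl i) (Sum.inl j)) ^ 2) -
          ∑ q : Fin m, (a (Sum.inl i) (Sum.inr q)) ^ 2 := by
      intro i; rw [hsplit]; simp [hε]
    have e2 : ∀ p : Fin m, ε (Sum.inr p) * ∑ l, ε l * (a (Sum.inr p) l) ^ 2 =
        -((∑ j : Fin r, (a (Sum.inr p) (Sum.inl j)) ^ 2) -
          ∑ q : Fin m, (a (Sum.inr p) (Sum.inr q)) ^ 2) := by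
      intro p; rw [hsplit]; simp [hε]
    simp only [e1, e2]
    rw [Finset.sum_sub_distrib, Finset.sum_neg_distrib, Finset.sum_sub_distrib]
    rw [hA, hC, hC', hD]
    ring
  rw [hLHS, hgoalA]
  have hn' : (r : ℝ) + (m : ℝ) = (n : ℝ) := by exact_mod_cast congrArg Nat.cast hrm
  linarith [hAC, hCD, hCC]
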